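/- Let d > 1 be squarefree and let β, γ ∈ R_d with 3 ∤ N(γ). If β ∈ P_d and γ ∈ P_d, then βγ ∈ P_d. -/

import Mathlib

def HalfCongr (A c M : ℤ) : Prop := A ≡ 2 * c [ZMOD M]

def MemPd (d : ℤ) (a b : ℚ) : Prop :=
  IsIntegral ℤ ((a : ℝ) + b * Real.sqrt d) ∧
  ∃ n A : ℤ, (A : ℚ) = 2 * a ∧ a ^ 2 - d * b ^ 2 = (n : ℚ) ^ 3 ∧
    (((n % 9 = 2 ∨ n % 9 = 5 ∨ n % 9 = 8) →
        ∃ c ∈ ([0, 2, -2, 7, -7, 9, -9, 11, -11] : List ℤ), HalfCongr A c 27) ∧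
     (n % 9 = 1 → ∃ c ∈ ([0, 1, -1, 9, -9] : List ℤ), HalfCongr A c 27) ∧
     (n % 9 = 4 → ∃ c ∈ ([0, 8, -8, 9, -9] : List ℤ), HalfCongr A c 27) ∧
     (n % 9 = 7 → ∃ c ∈ ([0, 9, -9, 10, -10] : List ℤ), HalfCongr A c 27) ∧
     (n % 9 = 0 → ∃ c ∈ ([4, -4, 5, -5, 13, -13] : List ℤ), HalfCongr A c 27) ∧
     ((n % 9 = 3 ∨ n % 9 = 6) →
        ∃ c ∈ ([0, 4, -4, 5, -5, 9, -9, 13, -13] : List ℤ), HalfCongr A c 27))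

def MemRd (d : ℤ) (a b : ℚ) : Prop :=
  ∃ r s n : ℚ, IsIntegral ℤ ((r : ℝ) + s * Real.sqrt d) ∧
    n = r ^ 2 - d * s ^ 2 ∧ a = n * r ∧ b = n * s

def Ls (m : ℤ) : List ℤ :=
  if m = 0 then [4, -4, 5, -5, 13, -13]
  else if m = 1 then [0, 1, -1, 9, -9]
  else if m = 4 then [0, 8, -8, 9, -9]
  else if m = 7 then [0, 9, -9, 10, -10]
  else if m = 3 ∨ m = 6 then [0, 4, -4, 5, -5, 9, -9, 13, -13]
  else [0, 2, -2, 7, -7, 9, -9, 11, -11]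

set_option maxRecDepth 100000 in
set_option maxHeartbeats 4000000 in
lemma core : ∀ m₁ ∈ ([0,1,2,3,4,5,6,7,8] : List ℤ), ∀ m₂ ∈ ([1,2,4,5,7,8] : List ℤ),
    ∀ c₁ ∈ Ls m₁, ∀ c₂ ∈ Ls m₂, ∀ x : ZMod 27,
    x ^ 2 = ((16 * (c₁^2 - m₁^3) * (c₂^2 - m₂^3) : ℤ) : ZMod 27) →
    (((4 * (c₁^2 - m₁^3) : ℤ) : ZMod 27) = 0 → ((4 * (c₂^2 - m₂^3) : ℤ) : ZMod 27) = 0 → x = 0) →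
    ∃ c ∈ Ls ((m₁ * m₂) % 9), x + ((4 * c₁ * c₂ : ℤ) : ZMod 27) = ((4 * c : ℤ) : ZMod 27) := by
  decide

lemma rat_int_of_sq (d : ℤ) (hsf : Squarefree d) (q : ℚ) (m : ℤ)
    (h : (d : ℚ) * q ^ 2 = (m : ℚ)) : ∃ B : ℤ, (B : ℚ) = q := by
  have hq : (d * q.num ^ 2 : ℤ) = m * (q.den : ℤ) ^ 2 := by
    have h2 := h
    rw [← Rat.num_div_den q] at h2
    have hden : ((q.den : ℚ)) ≠ 0 := by exact_mod_cast q.den_ne_zero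
    field_simp at h2
    rw [mul_comm (m : ℤ)]
    exact_mod_cast h2
  have hcop : IsCoprime ((q.den : ℤ)) q.num := by
    rw [Int.isCoprime_iff_gcd_eq_one]
    simpa [Int.gcd] using Nat.Coprime.symm q.reduced
  have hdvd : ((q.den : ℤ)) ^ 2 ∣ d := by
    have h1 : ((q.den : ℤ)) ^ 2 ∣ d * q.num ^ 2 := ⟨m, by linear_combination hq⟩
    exact (IsCoprime.pow hcop).dvd_of_dvd_mul_right h1
  have hu : IsUnit ((q.den : ℤ)) := hsf _ (by rwa [← pow_two])
  have hden1 : q.den = 1 := by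
    rcases Int.isUnit_iff.mp hu with h1 | h1
    · exact_mod_cast h1
    · exfalso; omega
  exact ⟨q.num, by rw [← Rat.num_div_den q, hden1]; simp⟩

private lemma three_nz : (3 : ℤ) ≠ 0 := by norm_num

lemma val27 (d B₁ B₂ : ℤ) (h9 : ¬ (9 : ℤ) ∣ d)
    (h1 : (27 : ℤ) ∣ d * B₁ ^ 2) (h2 : (27 : ℤ) ∣ d * B₂ ^ 2) :
    (27 : ℤ) ∣ d * B₁ * B₂ := by
  have p3 : Prime (3 : ℤ) := Int.prime_three
  by_cases h3 : (3 : ℤ) ∣ d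
  · obtain ⟨e, rfl⟩ := h3
    have he : ¬ (3 : ℤ) ∣ e := fun ⟨f, hf⟩ => h9 ⟨f, by rw [hf]; ring⟩
    have key : ∀ B : ℤ, (27 : ℤ) ∣ 3 * e * B ^ 2 → (3 : ℤ) ∣ B := by
      intro B hB
      obtain ⟨k, hk⟩ := hB
      have h3d : (3 : ℤ) ∣ e * B ^ 2 :=
        ⟨3 * k, mul_left_cancel₀ three_nz (by linear_combination hk)⟩
      rcases p3.dvd_mul.mp h3d with h | h
      · exact absurd h he
      · exact p3.dvd_of_dvd_pow h
    obtain ⟨x, hx⟩ := key B₁ h1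
    obtain ⟨y, hy⟩ := key B₂ h2
    exact ⟨e * x * y, by rw [hx, hy]; ring⟩
  · have key : ∀ B : ℤ, (27 : ℤ) ∣ d * B ^ 2 → (9 : ℤ) ∣ B := by
      intro B hB
      have h31 : (3 : ℤ) ∣ B := by
        have h' : (3 : ℤ) ∣ d * B ^ 2 := dvd_trans (by norm_num) hB
        rcases p3.dvd_mul.mp h' with h | h
        · exact absurd h h3
        · exact p3.dvd_of_dvd_pow h
      obtain ⟨x, rfl⟩ := h31
      obtain ⟨k, hk⟩ := hB
      have h32 : (3 : ℤ) ∣ d * x ^ 2 :=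
        ⟨k, mul_left_cancel₀ (show (9:ℤ) ≠ 0 by norm_num) (by linear_combination hk)⟩
      rcases p3.dvd_mul.mp h32 with h | h
      · exact absurd h h3
      · obtain ⟨y, hy⟩ := p3.dvd_of_dvd_pow h
        exact ⟨y, by rw [hy]; ring⟩
    obtain ⟨x, hx⟩ := key B₁ h1
    have h32 : (3 : ℤ) ∣ B₂ := by
      have h' : (3 : ℤ) ∣ d * B₂ ^ 2 := dvd_trans (by norm_num) h2
      rcases p3.dvd_mul.mp h' with h | h
      · exact absurd h h3
      · exact p3.dvd_of_dvd_pow h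
    obtain ⟨y, hy⟩ := h32
    exact ⟨d * x * y, by rw [hx, hy]; ring⟩

lemma par4 : ∀ d A₁ B₁ A₂ B₂ : ZMod 4, d ≠ 0 → A₁ ^ 2 = d * B₁ ^ 2 → A₂ ^ 2 = d * B₂ ^ 2 →
    ZMod.castHom (by norm_num : (2 : ℕ) ∣ 4) (ZMod 2) (A₁ * A₂ + d * B₁ * B₂) = 0 := by decide

lemma cube27aux (q r : ℤ) : (27 : ℤ) ∣ (9 * q + r) ^ 3 - r ^ 3 :=
  ⟨27 * q ^ 3 + 9 * q ^ 2 * r + q * r ^ 2, by ring⟩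

lemma cube27 (n : ℤ) : (27 : ℤ) ∣ n ^ 3 - (n % 9) ^ 3 := by
  have := cube27aux (n / 9) (n % 9)
  rwa [show 9 * (n / 9) + n % 9 = n by omega] at this

lemma toHC (A c : ℤ) (h : (A : ZMod 27) = ((2 * c : ℤ) : ZMod 27)) : HalfCongr A c 27 := by
  unfold HalfCongr
  have := (ZMod.intCast_eq_intCast_iff A (2 * c) 27).mp h
  exact_mod_cast this

lemma ofHC (A c : ℤ) (h : HalfCongr A c 27) : (A : ZMod 27) = ((2 * c : ℤ) : ZMod 27) := by
  unfold HalfCongr at h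
  exact (ZMod.intCast_eq_intCast_iff A (2 * c) 27).mpr (by exact_mod_cast h)

lemma two_cancel (u v : ZMod 27) (h : 2 * u = 2 * v) : u = v := by
  have h14 := congrArg (fun t => (14 : ZMod 27) * t) h
  simpa [← mul_assoc, show (14 * 2 : ZMod 27) = 1 by decide] using h14

lemma glue (n A : ℤ)
    (h : ((n % 9 = 2 ∨ n % 9 = 5 ∨ n % 9 = 8) →
        ∃ c ∈ ([0, 2, -2, 7, -7, 9, -9, 11, -11] : List ℤ), HalfCongr A c 27) ∧
     (n % 9 = 1 → ∃ c ∈ ([0, 1, -1, 9, -9] : List ℤ), HalfCongr A c 27) ∧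
     (n % 9 = 4 → ∃ c ∈ ([0, 8, -8, 9, -9] : List ℤ), HalfCongr A c 27) ∧
     (n % 9 = 7 → ∃ c ∈ ([0, 9, -9, 10, -10] : List ℤ), HalfCongr A c 27) ∧
     (n % 9 = 0 → ∃ c ∈ ([4, -4, 5, -5, 13, -13] : List ℤ), HalfCongr A c 27) ∧
     ((n % 9 = 3 ∨ n % 9 = 6) →
        ∃ c ∈ ([0, 4, -4, 5, -5, 9, -9, 13, -13] : List ℤ), HalfCongr A c 27)) :
    ∃ c ∈ Ls (n % 9), HalfCongr A c 27 := by
  obtain ⟨h258, h1, h4, h7, h0, h36⟩ := h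
  have h9 : n % 9 = 0 ∨ n % 9 = 1 ∨ n % 9 = 2 ∨ n % 9 = 3 ∨ n % 9 = 4 ∨ n % 9 = 5 ∨
      n % 9 = 6 ∨ n % 9 = 7 ∨ n % 9 = 8 := by omega
  rcases h9 with h | h | h | h | h | h | h | h | h <;> rw [h] <;> simp only [Ls] <;> norm_num
  · simpa using h0 h
  · simpa using h1 h
  · simpa using h258 (Or.inl h)
  · simpa using h36 (Or.inl h)
  · simpa using h4 h
  · simpa using h258 (Or.inr (Or.inl h))
  · simpa using h36 (Or.inr h)
  · simpa using h7 h
  · simpa using h258 (Or.inr (Or.inr h))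

lemma unglue (n A : ℤ) (hres : ∃ c ∈ Ls (n % 9), HalfCongr A c 27) :
    ((n % 9 = 2 ∨ n % 9 = 5 ∨ n % 9 = 8) →
        ∃ c ∈ ([0, 2, -2, 7, -7, 9, -9, 11, -11] : List ℤ), HalfCongr A c 27) ∧
     (n % 9 = 1 → ∃ c ∈ ([0, 1, -1, 9, -9] : List ℤ), HalfCongr A c 27) ∧
     (n % 9 = 4 → ∃ c ∈ ([0, 8, -8, 9, -9] : List ℤ), HalfCongr A c 27) ∧
     (n % 9 = 7 → ∃ c ∈ ([0, 9, -9, 10, -10] : List ℤ), HalfCongr A c 27) ∧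
     (n % 9 = 0 → ∃ c ∈ ([4, -4, 5, -5, 13, -13] : List ℤ), HalfCongr A c 27) ∧
     ((n % 9 = 3 ∨ n % 9 = 6) →
        ∃ c ∈ ([0, 4, -4, 5, -5, 9, -9, 13, -13] : List ℤ), HalfCongr A c 27) := by
  refine ⟨?_, ?_, ?_, ?_, ?_, ?_⟩ <;> intro hv
  · rcases hv with h | h | h <;> rw [h] at hres <;> simpa [Ls] using hres
  · rw [hv] at hres; simpa [Ls] using hres
  · rw [hv] at hres; simpa [Ls] using hres
  · rw [hv] at hres; simpa [Ls] using hres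
  · rw [hv] at hres; simpa [Ls] using hres
  · rcases hv with h | h <;> rw [h] at hres <;> simpa [Ls] using hres

theorem stmt_18 (d : ℤ) (hd : 1 < d) (hsf : Squarefree d)
    (a₁ b₁ a₂ b₂ : ℚ) (hβR : MemRd d a₁ b₁) (hγR : MemRd d a₂ b₂)
    (Nγ : ℤ) (hNγ : (Nγ : ℚ) = a₂ ^ 2 - d * b₂ ^ 2) (h3 : ¬(3 : ℤ) ∣ Nγ)
    (hβP : MemPd d a₁ b₁) (hγP : MemPd d a₂ b₂) :
    MemPd d (a₁ * a₂ + d * b₁ * b₂) (a₁ * b₂ + b₁ * a₂) := by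
  obtain ⟨hint₁, n₁, A₁, hA₁, hnorm₁, hcong₁⟩ := hβP
  obtain ⟨hint₂, n₂, A₂, hA₂, hnorm₂, hcong₂⟩ := hγP
  -- half-integrality of the b's
  have hq₁ : (d : ℚ) * (2 * b₁) ^ 2 = ((A₁ ^ 2 - 4 * n₁ ^ 3 : ℤ) : ℚ) := by
    push_cast
    linear_combination (-4 : ℚ) * hnorm₁ - ((A₁ : ℚ) + 2 * a₁) * hA₁
  have hq₂ : (d : ℚ) * (2 * b₂) ^ 2 = ((A₂ ^ 2 - 4 * n₂ ^ 3 : ℤ) : ℚ) := by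
    push_cast
    linear_combination (-4 : ℚ) * hnorm₂ - ((A₂ : ℚ) + 2 * a₂) * hA₂
  obtain ⟨B₁, hB₁⟩ := rat_int_of_sq d hsf (2 * b₁) _ hq₁
  obtain ⟨B₂, hB₂⟩ := rat_int_of_sq d hsf (2 * b₂) _ hq₂
  have E₁ : d * B₁ ^ 2 = A₁ ^ 2 - 4 * n₁ ^ 3 := by
    have h' := hq₁; rw [← hB₁] at h'; exact_mod_cast h'
  have E₂ : d * B₂ ^ 2 = A₂ ^ 2 - 4 * n₂ ^ 3 := by
    have h' := hq₂; rw [← hB₂] at h'; exact_mod_cast h'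
  -- 3 does not divide n₂
  have hNn : Nγ = n₂ ^ 3 := by
    have h' : (Nγ : ℚ) = ((n₂ ^ 3 : ℤ) : ℚ) := by rw [hNγ, hnorm₂]; push_cast; ring
    exact_mod_cast h'
  have h3n₂ : ¬ (3 : ℤ) ∣ n₂ := fun h => h3 (hNn ▸ dvd_pow h (by norm_num))
  -- parity : A exists
  have h4d : ¬ (4 : ℤ) ∣ d := by
    rintro ⟨k, hk⟩
    have := hsf 2 ⟨k, by rw [hk]; ring⟩
    norm_num [Int.isUnit_iff] at this
  have hd4 : ((d : ZMod 4)) ≠ 0 := by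
    rw [Ne, ZMod.intCast_zmod_eq_zero_iff_dvd]
    exact_mod_cast h4d
  have c1 : ((A₁ : ZMod 4)) ^ 2 = (d : ZMod 4) * (B₁ : ZMod 4) ^ 2 := by
    have h' := congrArg (fun z : ℤ => (z : ZMod 4)) E₁
    push_cast at h'
    rw [show (4 : ZMod 4) = 0 by decide] at h'
    linear_combination (-1 : ZMod 4) * h' 
  have c2 : ((A₂ : ZMod 4)) ^ 2 = (d : ZMod 4) * (B₂ : ZMod 4) ^ 2 := by
    have h' := congrArg (fun z : ℤ => (z : ZMod 4)) E₂
    push_cast at h'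
    rw [show (4 : ZMod 4) = 0 by decide] at h'
    linear_combination (-1 : ZMod 4) * h' 
  have h2dvd : (2 : ℤ) ∣ A₁ * A₂ + d * B₁ * B₂ := by
    have hpar := par4 (d : ZMod 4) (A₁ : ZMod 4) (B₁ : ZMod 4) (A₂ : ZMod 4) (B₂ : ZMod 4) hd4 c1 c2
    have hm : ((A₁ * A₂ + d * B₁ * B₂ : ℤ) : ZMod 2) = 0 := by
      have heq : ((A₁ * A₂ + d * B₁ * B₂ : ℤ) : ZMod 2) =
          (ZMod.castHom (by norm_num : (2 : ℕ) ∣ 4) (ZMod 2))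
            ((A₁ * A₂ + d * B₁ * B₂ : ℤ) : ZMod 4) := (map_intCast _ _).symm
      rw [heq]
      push_cast
      exact hpar
    exact (ZMod.intCast_zmod_eq_zero_iff_dvd _ 2).mp hm
  obtain ⟨A, hA2⟩ := h2dvd
  refine ⟨?_, n₁ * n₂, A, ?_, ?_, ?_⟩
  · -- integrality
    have hdR : (0 : ℝ) ≤ ((d : ℤ) : ℝ) := by
      have : (0 : ℤ) ≤ d := by omega
      exact_mod_cast this
    have hs : Real.sqrt d ^ 2 = ((d : ℤ) : ℝ) := Real.sq_sqrt hdR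
    have heq : ((↑(a₁ * a₂ + d * b₁ * b₂) : ℝ) + ↑(a₁ * b₂ + b₁ * a₂) * Real.sqrt d) =
        ((a₁ : ℝ) + b₁ * Real.sqrt d) * ((a₂ : ℝ) + b₂ * Real.sqrt d) := by
      push_cast
      linear_combination (-(b₁ : ℝ) * (b₂ : ℝ)) * hs
    rw [heq]
    exact hint₁.mul hint₂
  · -- A value
    have h2A : (2 : ℚ) * (A : ℚ) = 2 * (2 * (a₁ * a₂ + d * b₁ * b₂)) := by
      have h' := congrArg (fun z : ℤ => (z : ℚ)) hA2
      push_cast at h'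
      linear_combination -h' + ((A₂ : ℚ)) * hA₁ + 2 * a₁ * hA₂ + (d : ℚ) * (B₂ : ℚ) * hB₁ +
        (d : ℚ) * 2 * b₁ * hB₂
    exact mul_left_cancel₀ two_ne_zero h2A
  · -- norm
    push_cast
    linear_combination (a₂ ^ 2 - (d : ℚ) * b₂ ^ 2) * hnorm₁ + ((n₁ : ℚ)) ^ 3 * hnorm₂
  · -- congruences
    obtain ⟨c₁, hc₁mem, hc₁⟩ := glue n₁ A₁ hcong₁
    obtain ⟨c₂, hc₂mem, hc₂⟩ := glue n₂ A₂ hcong₂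
    have hc₁' := ofHC _ _ hc₁
    have hc₂' := ofHC _ _ hc₂
    have hm₁ : n₁ % 9 ∈ ([0,1,2,3,4,5,6,7,8] : List ℤ) := by
      simp only [List.mem_cons, List.not_mem_nil, or_false]
      omega
    have hm₂ : n₂ % 9 ∈ ([1,2,4,5,7,8] : List ℤ) := by
      simp only [List.mem_cons, List.not_mem_nil, or_false]
      omega
    -- the two mod-27 reductions of the norms
    have e1 : ((A₁ ^ 2 - 4 * n₁ ^ 3 : ℤ) : ZMod 27) = ((4 * (c₁ ^ 2 - (n₁ % 9) ^ 3) : ℤ) : ZMod 27) := by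
      have hcube : ((n₁ ^ 3 - (n₁ % 9) ^ 3 : ℤ) : ZMod 27) = 0 := by
        rw [ZMod.intCast_zmod_eq_zero_iff_dvd]
        exact_mod_cast cube27 n₁
      push_cast at hcube hc₁' ⊢
      linear_combination ((A₁ : ZMod 27) + 2 * (c₁ : ZMod 27)) * hc₁' - 4 * hcube
    have e2 : ((A₂ ^ 2 - 4 * n₂ ^ 3 : ℤ) : ZMod 27) = ((4 * (c₂ ^ 2 - (n₂ % 9) ^ 3) : ℤ) : ZMod 27) := by
      have hcube : ((n₂ ^ 3 - (n₂ % 9) ^ 3 : ℤ) : ZMod 27) = 0 := by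
        rw [ZMod.intCast_zmod_eq_zero_iff_dvd]
        exact_mod_cast cube27 n₂
      push_cast at hcube hc₂' ⊢
      linear_combination ((A₂ : ZMod 27) + 2 * (c₂ : ZMod 27)) * hc₂' - 4 * hcube
    have hxint : (d * B₁ * B₂) ^ 2 = (A₁ ^ 2 - 4 * n₁ ^ 3) * (A₂ ^ 2 - 4 * n₂ ^ 3) := by
      linear_combination (d * B₂ ^ 2) * E₁ + (A₁ ^ 2 - 4 * n₁ ^ 3) * E₂
    have hx2 : (((d * B₁ * B₂ : ℤ) : ZMod 27)) ^ 2 =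
        ((16 * (c₁ ^ 2 - (n₁ % 9) ^ 3) * (c₂ ^ 2 - (n₂ % 9) ^ 3) : ℤ) : ZMod 27) := by
      have h' := congrArg (fun z : ℤ => (z : ZMod 27)) hxint
      push_cast at h' e1 e2 ⊢
      linear_combination h' + (4 * ((c₂ : ZMod 27) ^ 2 - ((n₂ % 9 : ℤ) : ZMod 27) ^ 3)) * e1 +
        ((A₁ : ZMod 27) ^ 2 - 4 * (n₁ : ZMod 27) ^ 3) * e2
    have h9d : ¬ (9 : ℤ) ∣ d := by
      rintro ⟨k, hk⟩
      have := hsf 3 ⟨k, by rw [hk]; ring⟩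
      norm_num [Int.isUnit_iff] at this
    have hximp : ((4 * (c₁ ^ 2 - (n₁ % 9) ^ 3) : ℤ) : ZMod 27) = 0 →
        ((4 * (c₂ ^ 2 - (n₂ % 9) ^ 3) : ℤ) : ZMod 27) = 0 → ((d * B₁ * B₂ : ℤ) : ZMod 27) = 0 := by
      intro z1 z2
      rw [← e1] at z1
      rw [← e2] at z2
      have d1 : (27 : ℤ) ∣ d * B₁ ^ 2 := by
        rw [E₁]
        exact_mod_cast (ZMod.intCast_zmod_eq_zero_iff_dvd _ 27).mp z1
      have d2 : (27 : ℤ) ∣ d * B₂ ^ 2 := by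
        rw [E₂]
        exact_mod_cast (ZMod.intCast_zmod_eq_zero_iff_dvd _ 27).mp z2
      rw [ZMod.intCast_zmod_eq_zero_iff_dvd]
      exact_mod_cast val27 d B₁ B₂ h9d d1 d2
    obtain ⟨c, hcmem, hcx⟩ := core (n₁ % 9) hm₁ (n₂ % 9) hm₂ c₁ hc₁mem c₂ hc₂mem
      ((d * B₁ * B₂ : ℤ) : ZMod 27) hx2 hximp
    rw [← Int.mul_emod] at hcmem
    have hfin : (A : ZMod 27) = ((2 * c : ℤ) : ZMod 27) := by
      apply two_cancel
      have h2A : ((2 * A : ℤ) : ZMod 27) = ((A₁ * A₂ + d * B₁ * B₂ : ℤ) : ZMod 27) := by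
        rw [← hA2]
      push_cast at h2A hc₁' hc₂' hcx ⊢
      linear_combination h2A + ((A₂ : ZMod 27)) * hc₁' + 2 * (c₁ : ZMod 27) * hc₂' + hcx
    exact unglue (n₁ * n₂) A ⟨c, hcmem, toHC A c hfin⟩
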